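/- Let F be a field, let A₁, …, A_k be finite subsets of F each of size N ≥ 1, and let f be a nonzero polynomial in k variables over F. Then the number of points in the Cartesian product A₁ × ⋯ × A_k at which f vanishes is at most (deg f)·N^(k-1). -/

import Mathlib

open scoped Classical

open Finset MvPolynomial

private lemma totalDegree_zero_of_isEmpty {F : Type*} [CommSemiring F] {σ : Type*} [IsEmpty σ]
    (p : MvPolynomial σ F) : p.totalDegree = 0 := by
  rw [MvPolynomial.eq_C_of_isEmpty p]
  exact MvPolynomial.totalDegree_C _

private lemma schwartz_zippel_aux {F : Type*} [Field F] (N : ℕ) (hN : 1 ≤ N) :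
    ∀ (k : ℕ) (A : Fin k → Finset F), (∀ i, (A i).card = N) →
      ∀ (f : MvPolynomial (Fin k) F), f ≠ 0 →
      ((Fintype.piFinset A).filter (fun v => MvPolynomial.eval v f = 0)).card ≤
        f.totalDegree * N ^ (k - 1) := by
  intro k
  induction k with
  | zero =>
      intro A hA f hf
      have : ((Fintype.piFinset A).filter (fun v => MvPolynomial.eval v f = 0)) = ∅ := by
        apply Finset.filter_false_of_mem
        intro v _
        rw [MvPolynomial.eq_C_of_isEmpty f, MvPolynomial.eval_C]
        intro h
        exact hf (by rw [MvPolynomial.eq_C_of_isEmpty f, h, map_zero])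
      rw [this, Finset.card_empty]
      exact Nat.zero_le _
  | succ n IH =>
      intro A hA f hf
      set g : Polynomial (MvPolynomial (Fin n) F) := MvPolynomial.finSuccEquiv F n f with hgdef
      have hg : g ≠ 0 := by
        simpa [hgdef] using (map_ne_zero_iff _ (MvPolynomial.finSuccEquiv F n).injective).2 hf
      set d : ℕ := g.natDegree with hddef
      set fd : MvPolynomial (Fin n) F := g.coeff d with hfddef
      have hfd : fd ≠ 0 := by
        simpa [hfddef, hddef] using Polynomial.leadingCoeff_ne_zero.2 hg
      set A' : Fin n → Finset F := fun i => A i.succ with hA'def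
      have hA' : ∀ i, (A' i).card = N := fun i => hA i.succ
      set B : Finset (Fin n → F) := Fintype.piFinset A' with hBdef
      have hBcard : B.card = N ^ n := by
        simp [hBdef, Fintype.card_piFinset, hA']
      -- the zero set as an image of a product
      set S := ((Fintype.piFinset A).filter (fun v => MvPolynomial.eval v f = 0)) with hSdef
      set T := ((A 0 ×ˢ B).filter
        (fun p : F × (Fin n → F) => MvPolynomial.eval (Fin.cons p.1 p.2) f = 0)) with hTdef
      have hST : S = T.image (fun p => Fin.cons p.1 p.2) := by
        ext v
        simp only [hSdef, hTdef, hBdef, hA'def, Finset.mem_filter, Finset.mem_image,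
          Fintype.mem_piFinset, Finset.mem_product]
        constructor
        · rintro ⟨hv, hv0⟩
          refine ⟨(v 0, Fin.tail v), ⟨⟨hv 0, fun i : Fin n => hv i.succ⟩, ?_⟩,
            Fin.cons_self_tail v⟩
          rw [Fin.cons_self_tail]; exact hv0
        · rintro ⟨⟨y, s⟩, ⟨⟨hy, hs⟩, h0⟩, rfl⟩
          refine ⟨?_, h0⟩
          intro i
          refine Fin.cases ?_ ?_ i
          · simpa using hy
          · intro j; simpa using hs j
      have hScard : S.card = T.card := by
        rw [hST]
        exact Finset.card_image_of_injective _ (fun p q h => by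
          obtain ⟨hp, hq⟩ := Fin.cons_inj.1 h
          exact Prod.ext hp hq)
      -- split T according to whether the leading coefficient vanishes on the tail
      set Q : F × (Fin n → F) → Prop := fun p => MvPolynomial.eval p.2 fd = 0 with hQdef
      have hsplit : (T.filter Q).card + (T.filter (fun p => ¬ Q p)).card = T.card :=
        Finset.card_filter_add_card_filter_not _
      -- bound the first part
      have h1 : (T.filter Q).card ≤ fd.totalDegree * N ^ n := by
        have hsub : T.filter Q ⊆ A 0 ×ˢ (B.filter (fun s => MvPolynomial.eval s fd = 0)) := by
          intro p hp
          simp only [hTdef, hQdef, Finset.mem_filter, Finset.mem_product] at hp ⊢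
          exact ⟨hp.1.1.1, hp.1.1.2, hp.2⟩
        have := Finset.card_le_card hsub
        rw [Finset.card_product] at this
        have hZ : (B.filter (fun s => MvPolynomial.eval s fd = 0)).card ≤
            fd.totalDegree * N ^ (n - 1) := IH A' hA' fd hfd
        calc (T.filter Q).card ≤ (A 0).card * (B.filter (fun s => MvPolynomial.eval s fd = 0)).card := this
          _ ≤ N * (fd.totalDegree * N ^ (n - 1)) := by
              rw [hA 0]; exact Nat.mul_le_mul_left _ hZ
          _ ≤ fd.totalDegree * N ^ n := by
              rcases Nat.eq_zero_or_pos n with rfl | hn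
              · have : fd.totalDegree = 0 := totalDegree_zero_of_isEmpty fd
                simp [this]
              · rw [mul_comm N, mul_assoc]
                apply Nat.mul_le_mul_left
                exact le_of_eq (by rw [← pow_succ, Nat.sub_add_cancel hn])
      -- bound the second part
      have h2 : (T.filter (fun p => ¬ Q p)).card ≤ N ^ n * d := by
        have hfib : ∀ p ∈ T.filter (fun p => ¬ Q p), p.2 ∈ B := by
          intro p hp
          simp only [hTdef, Finset.mem_filter, Finset.mem_product] at hp
          exact hp.1.1.2
        rw [Finset.card_eq_sum_card_fiberwise hfib]
        calc ∑ s ∈ B, ((T.filter (fun p => ¬ Q p)).filter (fun p => p.2 = s)).card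
            ≤ ∑ _s ∈ B, d := by
              apply Finset.sum_le_sum
              intro s _
              by_cases hQs : MvPolynomial.eval s fd = 0
              · have : (T.filter (fun p => ¬ Q p)).filter (fun p => p.2 = s) = ∅ := by
                  apply Finset.filter_false_of_mem
                  intro p hp hps
                  simp only [hQdef, Finset.mem_filter] at hp
                  exact hp.2 (hps ▸ hQs)
                simp [this]
              · -- roots of the univariate specialization
                set q : Polynomial F := g.map (MvPolynomial.eval s) with hqdef
                have hq0 : q ≠ 0 := by
                  intro h
                  apply hQs
                  have := Polynomial.coeff_map (p := g) (MvPolynomial.eval s) d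
                  rw [← hqdef, h, Polynomial.coeff_zero] at this
                  exact this.symm
                refine le_trans (Finset.card_le_card_of_injOn
                  (f := fun p : F × (Fin n → F) => p.1) (t := q.roots.toFinset) ?_ ?_) ?_
                · intro p hp
                  simp only [hTdef, hQdef, Finset.mem_coe, Finset.mem_filter, Finset.mem_product] at hp
                  have hps : p.2 = s := hp.2
                  have hpf : MvPolynomial.eval (Fin.cons p.1 p.2) f = 0 := hp.1.1.2
                  rw [Finset.mem_coe, Multiset.mem_toFinset, Polynomial.mem_roots hq0]
                  show Polynomial.eval p.1 q = 0
                  rw [hqdef, hgdef, ← hps, ← MvPolynomial.eval_eq_eval_mv_eval']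
                  exact hpf
                · intro p hp p' hp' h
                  simp only [Finset.mem_coe, Finset.mem_filter] at hp hp'
                  exact Prod.ext h (hp.2.trans hp'.2.symm)
                · calc q.roots.toFinset.card ≤ Multiset.card q.roots :=
                      q.roots.toFinset_card_le
                    _ ≤ q.natDegree := Polynomial.card_roots' q
                    _ ≤ d := Polynomial.natDegree_map_le
          _ = N ^ n * d := by rw [Finset.sum_const, smul_eq_mul, hBcard]
      -- combine
      have hdeg : fd.totalDegree + d ≤ f.totalDegree :=
        MvPolynomial.totalDegree_coeff_finSuccEquiv_add_le f d hfd
      have : S.card ≤ fd.totalDegree * N ^ n + N ^ n * d := by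
        rw [hScard, ← hsplit]
        exact Nat.add_le_add h1 h2
      calc S.card ≤ fd.totalDegree * N ^ n + N ^ n * d := this
        _ = (fd.totalDegree + d) * N ^ n := by ring
        _ ≤ f.totalDegree * N ^ n := Nat.mul_le_mul_right _ hdeg
        _ = f.totalDegree * N ^ (n + 1 - 1) := by norm_num

/-- **Schwartz–Zippel lemma.** -/
theorem schwartz_zippel {F : Type*} [Field F] (k N : ℕ) (hN : 1 ≤ N)
    (A : Fin k → Finset F) (hA : ∀ i, (A i).card = N)
    (f : MvPolynomial (Fin k) F) (hf : f ≠ 0) :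
    ((Fintype.piFinset A).filter (fun v => MvPolynomial.eval v f = 0)).card ≤
      f.totalDegree * N ^ (k - 1) := by
  exact schwartz_zippel_aux N hN k A hA f hf
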